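/- arXiv:2601.14174 — 5 statements merged into one kernel-verified Lean document; each statement's English description precedes it below -/
import Mathlib

section
/- In the setting of the trace-greedy extraction (R^{(0)} = R, D_k = (R^{(k-1)})^{1/2} P_{j_k} (R^{(k-1)})^{1/2} with j_k maximizing the trace of the extracted block among N projections summing to I), the remainders R^{(m)} = R − ∑_{k=1}^m D_k converge to 0 in trace norm, with ‖R − ∑_{k=1}^m D_k‖₁ ≤ (1 − 1/N)^m tr(R); hence R = ∑_{k=1}^∞ D_k in the trace class. -/
set_option synthInstance.maxHeartbeats 1000000
set_option maxHeartbeats 1000000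

noncomputable section

variable {H : Type*} [NormedAddCommGroup H] [InnerProductSpace ℂ H] [CompleteSpace H]

/-- the trace-greedy partial sums converge to R in trace norm,
with geometric remainder bound; for positive remainders the trace norm is the trace. -/
theorem trace_greedy_series {ι : Type*} (b : HilbertBasis ι ℂ H)
    {N : ℕ} (hN : 0 < N)
    (P : Fin N → H →L[ℂ] H)
    (hsa : ∀ j, IsSelfAdjoint (P j)) (hidem : ∀ j, IsIdempotentElem (P j))
    (horth : ∀ j j', j ≠ j' → P j * P j' = 0)
    (hsum : ∑ j, P j = 1)
    (R : H →L[ℂ] H) (hR : 0 ≤ R)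
    (htc : Summable fun i => (inner ℂ (b i) (R (b i)) : ℂ).re)
    (Rseq : ℕ → H →L[ℂ] H) (jsel : ℕ → Fin N) (D : ℕ → H →L[ℂ] H)
    (h0 : Rseq 0 = R)
    (hpos : ∀ k, 0 ≤ Rseq k)
    (hD : ∀ k, D k = CFC.sqrt (Rseq k) * P (jsel k) * CFC.sqrt (Rseq k))
    (hrec : ∀ k, Rseq (k + 1) = Rseq k - D k)
    (hgreedy : ∀ k, ∀ j : Fin N,
      ∑' i, (inner ℂ (b i) ((CFC.sqrt (Rseq k) * P j * CFC.sqrt (Rseq k)) (b i)) : ℂ).re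
        ≤ ∑' i, (inner ℂ (b i) (D k (b i)) : ℂ).re) :
    (∀ m, ∑' i, (inner ℂ (b i) (((R - ∑ k ∈ Finset.range m, D k)) (b i)) : ℂ).re
        ≤ (1 - 1 / (N : ℝ)) ^ m * ∑' i, (inner ℂ (b i) (R (b i)) : ℂ).re) ∧
    Filter.Tendsto
      (fun m => ∑' i, (inner ℂ (b i) (((R - ∑ k ∈ Finset.range m, D k)) (b i)) : ℂ).re)
      Filter.atTop (nhds 0) := by
  -- diagonal entries
  set diag : (H →L[ℂ] H) → ι → ℝ := fun T i => (inner ℂ (b i) (T (b i)) : ℂ).re with hdiagdef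
  have hdiag_nonneg : ∀ (T : H →L[ℂ] H), 0 ≤ T → ∀ i, 0 ≤ diag T i := by
    intro T hT i
    exact (Complex.le_def.mp (((ContinuousLinearMap.nonneg_iff_isPositive T).mp hT).inner_nonneg_right (b i))).1
  have hdiag_mono : ∀ (T S : H →L[ℂ] H), T ≤ S → ∀ i, diag T i ≤ diag S i := by
    intro T S hTS i
    have h := ((ContinuousLinearMap.nonneg_iff_isPositive (S - T)).mp
      (sub_nonneg.mpr hTS)).inner_nonneg_right (b i)
    simp only [ContinuousLinearMap.sub_apply, inner_sub_right] at h
    simp only [hdiagdef]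
    have : (0:ℝ) ≤ ((inner ℂ (b i) (S (b i)) : ℂ) - (inner ℂ (b i) (T (b i)) : ℂ)).re := (Complex.le_def.mp h).1
    rw [Complex.sub_re] at this
    linarith
  have hdiag_summable : ∀ (T : H →L[ℂ] H), 0 ≤ T → T ≤ R → Summable (diag T) := by
    intro T hT hTR
    exact Summable.of_nonneg_of_le (hdiag_nonneg T hT) (hdiag_mono T R hTR) htc
  -- projections positive and ≤ 1
  have hPpos : ∀ j, 0 ≤ P j := by
    intro j
    have : P j = star (P j) * P j := by
      rw [(hsa j).star_eq]; exact (hidem j).symm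
    rw [this]; exact star_mul_self_nonneg _
  have hPle1 : ∀ j, P j ≤ 1 := by
    intro j
    rw [← sub_nonneg, ← hsum, ← Finset.add_sum_erase _ _ (Finset.mem_univ j),
      add_sub_cancel_left]
    exact Finset.sum_nonneg fun j' _ => hPpos j'
  -- sqrt facts
  have hcpos : ∀ k, (0:H →L[ℂ] H) ≤ CFC.sqrt (Rseq k) := fun k => CFC.sqrt_nonneg _
  have hcc : ∀ k, CFC.sqrt (Rseq k) * CFC.sqrt (Rseq k) = Rseq k := fun k =>
    CFC.sqrt_mul_sqrt_self _ (hpos k)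
  -- positivity chain
  have hblockpos : ∀ k j, (0:H →L[ℂ] H) ≤ CFC.sqrt (Rseq k) * P j * CFC.sqrt (Rseq k) :=
    fun k j => conjugate_nonneg_of_nonneg (hPpos j) (hcpos k)
  have hblockle : ∀ k j, CFC.sqrt (Rseq k) * P j * CFC.sqrt (Rseq k) ≤ Rseq k := by
    intro k j
    have := conjugate_le_conjugate_of_nonneg (hPle1 j) (hcpos k)
    rwa [mul_one, hcc k] at this
  have hDpos : ∀ k, 0 ≤ D k := fun k => (hD k) ▸ hblockpos k (jsel k)
  have hDle : ∀ k, D k ≤ Rseq k := by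
    intro k
    have := hpos (k + 1)
    rw [hrec k] at this
    exact sub_nonneg.mp this
  have hRle : ∀ m, Rseq m ≤ R := by
    intro m
    induction m with
    | zero => rw [h0]
    | succ m ih =>
      rw [hrec m]
      exact le_trans (sub_le_self _ (hDpos m)) ih
  -- summability of all relevant diagonals
  have hsumR : ∀ m, Summable (diag (Rseq m)) := fun m =>
    hdiag_summable _ (hpos m) (hRle m)
  have hsumD : ∀ k, Summable (diag (D k)) := fun k =>
    hdiag_summable _ (hDpos k) (le_trans (hDle k) (hRle k))
  have hsumblock : ∀ k j, Summable (diag (CFC.sqrt (Rseq k) * P j * CFC.sqrt (Rseq k))) :=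
    fun k j => hdiag_summable _ (hblockpos k j) (le_trans (hblockle k j) (hRle k))
  -- partial sums equal Rseq
  have hpartial : ∀ m, R - ∑ k ∈ Finset.range m, D k = Rseq m := by
    intro m
    induction m with
    | zero => simp [h0]
    | succ m ih =>
      rw [Finset.sum_range_succ, ← sub_sub, ih, ← hrec m]
  -- traces
  set t : ℕ → ℝ := fun m => ∑' i, diag (Rseq m) i with htdef
  have ht_nonneg : ∀ m, 0 ≤ t m := fun m =>
    tsum_nonneg (hdiag_nonneg _ (hpos m))
  -- trace splits: t m = trD m + t (m+1)
  have hstep : ∀ m, t m = (∑' i, diag (D m) i) + t (m + 1) := by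
    intro m
    have hop : Rseq m = D m + Rseq (m + 1) := by
      rw [hrec m]; abel
    have hpt : ∀ i, diag (Rseq m) i = diag (D m) i + diag (Rseq (m + 1)) i := by
      intro i
      simp only [hdiagdef, hop, ContinuousLinearMap.add_apply, inner_add_right,
        Complex.add_re]
    calc t m = ∑' i, (diag (D m) i + diag (Rseq (m + 1)) i) := tsum_congr hpt
      _ = _ := Summable.tsum_add (hsumD m) (hsumR (m + 1))
  -- sum over blocks equals trace
  have havg : ∀ m, ∑ j, (∑' i, diag (CFC.sqrt (Rseq m) * P j * CFC.sqrt (Rseq m)) i) = t m := by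
    intro m
    have hop : ∑ j, CFC.sqrt (Rseq m) * P j * CFC.sqrt (Rseq m) = Rseq m := by
      rw [← Finset.sum_mul, ← Finset.mul_sum, hsum, mul_one, hcc m]
    have hpt : ∀ i, ∑ j, diag (CFC.sqrt (Rseq m) * P j * CFC.sqrt (Rseq m)) i
        = diag (Rseq m) i := by
      intro i
      calc ∑ j, diag (CFC.sqrt (Rseq m) * P j * CFC.sqrt (Rseq m)) i
          = (inner ℂ (b i) ((∑ j, CFC.sqrt (Rseq m) * P j * CFC.sqrt (Rseq m)) (b i)) : ℂ).re := by
            simp [hdiagdef, ContinuousLinearMap.sum_apply, inner_sum, Complex.re_sum]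
        _ = diag (Rseq m) i := by rw [hop]
    rw [← Summable.tsum_finsetSum fun j _ => hsumblock m j]
    exact tsum_congr hpt
  -- greedy bound: t m ≤ N * trD m
  have hgeo : ∀ m, t (m + 1) ≤ (1 - 1 / (N : ℝ)) * t m := by
    intro m
    have hND : t m ≤ (N : ℝ) * ∑' i, diag (D m) i := by
      calc t m = ∑ j, (∑' i, diag (CFC.sqrt (Rseq m) * P j * CFC.sqrt (Rseq m)) i) :=
            (havg m).symm
        _ ≤ ∑ _j : Fin N, (∑' i, diag (D m) i) :=
            Finset.sum_le_sum fun j _ => hgreedy m j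
        _ = (N : ℝ) * ∑' i, diag (D m) i := by
            simp [Finset.sum_const, nsmul_eq_mul]
    have hNpos : (0:ℝ) < N := by exact_mod_cast hN
    have hDge : t m / N ≤ ∑' i, diag (D m) i := by
      rw [div_le_iff₀ hNpos] at *
      linarith [hND]
    have := hstep m
    have : t (m + 1) = t m - ∑' i, diag (D m) i := by linarith [hstep m]
    rw [this]
    have : (1 - 1 / (N : ℝ)) * t m = t m - t m / N := by
      field_simp
    rw [this]
    linarith [hDge]
  -- geometric bound
  set r : ℝ := 1 - 1 / (N : ℝ) with hrdef
  have hr0 : 0 ≤ r := by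
    have : (1:ℝ) ≤ N := by exact_mod_cast hN
    have : 1 / (N : ℝ) ≤ 1 := by
      rw [div_le_one (by positivity)]; exact this
    simp only [hrdef]; linarith
  have hr1 : r < 1 := by
    have hNpos : (0:ℝ) < N := by exact_mod_cast hN
    have : 0 < 1 / (N : ℝ) := by positivity
    simp only [hrdef]; linarith
  have hbound : ∀ m, t m ≤ r ^ m * t 0 := by
    intro m
    induction m with
    | zero => simp
    | succ m ih =>
      calc t (m + 1) ≤ r * t m := hgeo m
        _ ≤ r * (r ^ m * t 0) := mul_le_mul_of_nonneg_left ih hr0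
        _ = r ^ (m + 1) * t 0 := by ring
  have ht0 : t 0 = ∑' i, (inner ℂ (b i) (R (b i)) : ℂ).re := by
    simp only [htdef, hdiagdef, h0]
  have hfun : ∀ m, ∑' i, (inner ℂ (b i) (((R - ∑ k ∈ Finset.range m, D k)) (b i)) : ℂ).re
      = t m := by
    intro m
    simp only [htdef, hdiagdef, hpartial m]
  constructor
  · intro m
    rw [hfun m, ← ht0]
    exact hbound m
  · have hlim : Filter.Tendsto (fun m => r ^ m * t 0) Filter.atTop (nhds 0) := by
      simpa using (tendsto_pow_atTop_nhds_zero_of_lt_one hr0 hr1).mul_const (t 0)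
    have := squeeze_zero (fun m => (hfun m) ▸ ht_nonneg m)
      (fun m => (hfun m) ▸ hbound m) hlim
    simpa [hfun] using this
end
end

section
/- Let A be a positive Hilbert-Schmidt operator on a Hilbert space H and P_1,…,P_N orthogonal projections with pairwise orthogonal ranges summing to I. Then (1/N)‖A‖₂² ≤ ∑_{j=1}^N ‖A^{1/2} P_j A^{1/2}‖₂² ≤ ‖A‖₂². -/
set_option synthInstance.maxHeartbeats 1000000
set_option maxHeartbeats 1000000

noncomputable section

open scoped ENNReal NNReal
open ContinuousLinearMap

variable {H : Type*} [NormedAddCommGroup H] [InnerProductSpace ℂ H] [CompleteSpace H]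

local notation "⟪" x ", " y "⟫" => @inner ℂ _ _ x y

namespace HSB

variable {ι : Type*} (b : HilbertBasis ι ℂ H)

/-- ENNReal-valued Hilbert–Schmidt-type sum. -/
def sE (T : H →L[ℂ] H) : ℝ≥0∞ := ∑' i, (‖T (b i)‖₊ : ℝ≥0∞) ^ 2

lemma parseval_hasSum (x : H) : HasSum (fun k : ι => ‖⟪b k, x⟫‖ ^ 2) (‖x‖ ^ 2) := by
  have h := (b.hasSum_inner_mul_inner x x).mapL Complex.reCLM
  have h1 : (fun k : ι => Complex.reCLM (⟪x, b k⟫ * ⟪b k, x⟫)) = fun k : ι => ‖⟪b k, x⟫‖ ^ 2 := by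
    funext k
    rw [← inner_conj_symm (b k) x, Complex.mul_conj]
    simp only [Complex.reCLM_apply, Complex.normSq_eq_norm_sq, ← Complex.ofReal_pow,
      Complex.ofReal_re]
    rw [Complex.norm_conj]
  have h2 : Complex.reCLM ⟪x, x⟫ = ‖x‖ ^ 2 := by
    rw [inner_self_eq_norm_sq_to_K]
    simp [← Complex.ofReal_pow]
  rw [h1, h2] at h
  exact h

lemma parseval_sE (x : H) :
    ∑' k : ι, (‖⟪b k, x⟫‖₊ : ℝ≥0∞) ^ 2 = (‖x‖₊ : ℝ≥0∞) ^ 2 := by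
  have h := parseval_hasSum b x
  have h1 : ENNReal.ofReal (∑' k : ι, ‖⟪b k, x⟫‖ ^ 2) = ∑' k : ι, ENNReal.ofReal (‖⟪b k, x⟫‖ ^ 2) :=
    ENNReal.ofReal_tsum_of_nonneg (fun k => by positivity) h.summable
  rw [h.tsum_eq] at h1
  calc ∑' k : ι, (‖⟪b k, x⟫‖₊ : ℝ≥0∞) ^ 2
      = ∑' k : ι, ENNReal.ofReal (‖⟪b k, x⟫‖ ^ 2) := by
        refine tsum_congr fun k => ?_
        rw [ENNReal.ofReal_pow (norm_nonneg _), ofReal_norm, enorm_eq_nnnorm]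
    _ = ENNReal.ofReal (‖x‖ ^ 2) := h1.symm
    _ = (‖x‖₊ : ℝ≥0∞) ^ 2 := by
        rw [ENNReal.ofReal_pow (norm_nonneg _), ofReal_norm, enorm_eq_nnnorm]

lemma sE_eq_double (T : H →L[ℂ] H) :
    sE b T = ∑' i, ∑' k, (‖⟪b k, T (b i)⟫‖₊ : ℝ≥0∞) ^ 2 :=
  tsum_congr fun i => (parseval_sE b _).symm

lemma sE_adjoint (T : H →L[ℂ] H) : sE b (ContinuousLinearMap.adjoint T) = sE b T := by
  rw [sE_eq_double, sE_eq_double]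
  have key : ∀ i k : ι, (‖⟪b k, (ContinuousLinearMap.adjoint T) (b i)⟫‖₊ : ℝ≥0∞) ^ 2
      = (‖⟪b i, T (b k)⟫‖₊ : ℝ≥0∞) ^ 2 := by
    intro i k
    rw [ContinuousLinearMap.adjoint_inner_right]
    have hnn : ‖⟪T (b k), b i⟫‖ = ‖⟪b i, T (b k)⟫‖ := norm_inner_symm _ _
    rw [show ‖⟪T (b k), b i⟫‖₊ = ‖⟪b i, T (b k)⟫‖₊ from NNReal.coe_injective (by simpa using hnn)]
  calc (∑' i, ∑' k, (‖⟪b k, (ContinuousLinearMap.adjoint T) (b i)⟫‖₊ : ℝ≥0∞) ^ 2)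
      = ∑' i, ∑' k, (‖⟪b i, T (b k)⟫‖₊ : ℝ≥0∞) ^ 2 :=
        tsum_congr fun i => tsum_congr fun k => key i k
    _ = ∑' i, ∑' k, (‖⟪b k, T (b i)⟫‖₊ : ℝ≥0∞) ^ 2 := ENNReal.tsum_comm

lemma norm_apply_eq_of_star_mul_self (T U : H →L[ℂ] H) (h : star T * T = star U * U) (x : H) :
    ‖T x‖ = ‖U x‖ := by
  have h1 : ⟪T x, T x⟫ = ⟪U x, U x⟫ := by
    have e : ∀ V : H →L[ℂ] H, ⟪x, (star V * V) x⟫ = ⟪V x, V x⟫ := by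
      intro V
      rw [ContinuousLinearMap.mul_apply, ContinuousLinearMap.star_eq_adjoint,
        ContinuousLinearMap.adjoint_inner_right]
    rw [← e T, ← e U, h]
  rw [inner_self_eq_norm_sq_to_K, inner_self_eq_norm_sq_to_K] at h1
  have h2 : ‖T x‖ ^ 2 = ‖U x‖ ^ 2 := by exact_mod_cast h1
  nlinarith [norm_nonneg (T x), norm_nonneg (U x)]

lemma sE_congr_norm (T U : H →L[ℂ] H) (h : ∀ x, ‖T x‖ = ‖U x‖) : sE b T = sE b U :=
  tsum_congr fun i => by rw [show ‖T (b i)‖₊ = ‖U (b i)‖₊ from NNReal.coe_injective (by simp [h])]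

lemma sE_coe (T : H →L[ℂ] H) : sE b T = ∑' i, ((‖T (b i)‖₊ ^ 2 : ℝ≥0) : ℝ≥0∞) := by
  simp [sE, ENNReal.coe_pow]

lemma summable_of_sE_ne_top (T : H →L[ℂ] H) (h : sE b T ≠ ⊤) :
    Summable (fun i => ‖T (b i)‖ ^ 2) := by
  rw [sE_coe] at h
  have := ENNReal.tsum_coe_ne_top_iff_summable.mp h
  have := NNReal.summable_coe.mpr this
  simpa using this

lemma tsum_sq_eq_toReal (T : H →L[ℂ] H) (h : sE b T ≠ ⊤) :
    ∑' i, ‖T (b i)‖ ^ 2 = (sE b T).toReal := by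
  rw [sE_coe] at h ⊢
  have hs := ENNReal.tsum_coe_ne_top_iff_summable.mp h
  rw [← ENNReal.coe_tsum hs, ENNReal.coe_toReal, NNReal.coe_tsum]
  simp

lemma sE_ne_top_of_summable (T : H →L[ℂ] H) (h : Summable (fun i => ‖T (b i)‖ ^ 2)) :
    sE b T ≠ ⊤ := by
  rw [sE_coe]
  refine ENNReal.tsum_coe_ne_top_iff_summable.mpr ?_
  rw [← NNReal.summable_coe]
  simpa using h

end HSB

end

noncomputable section

open scoped ENNReal NNReal

variable {H : Type*} [NormedAddCommGroup H] [InnerProductSpace ℂ H] [CompleteSpace H]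

/-- two-sided bound for the sum of squared HS norms of the content blocks. -/
theorem hs_block_bounds {ι : Type*} (b : HilbertBasis ι ℂ H)
    {N : ℕ} (hN : 0 < N)
    (P : Fin N → H →L[ℂ] H)
    (hsa : ∀ j, IsSelfAdjoint (P j)) (hidem : ∀ j, IsIdempotentElem (P j))
    (horth : ∀ j j', j ≠ j' → P j * P j' = 0)
    (hsum : ∑ j, P j = 1)
    (A : H →L[ℂ] H) (hA : 0 ≤ A)
    (hHS : Summable fun i => ‖A (b i)‖ ^ 2) :
    (1 / (N : ℝ)) * ∑' i, ‖A (b i)‖ ^ 2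
        ≤ ∑ j, ∑' i, ‖(CFC.sqrt A * P j * CFC.sqrt A) (b i)‖ ^ 2 ∧
    ∑ j, ∑' i, ‖(CFC.sqrt A * P j * CFC.sqrt A) (b i)‖ ^ 2
        ≤ ∑' i, ‖A (b i)‖ ^ 2 := by
  classical
  simp only [mul_assoc]
  set s : H →L[ℂ] H := CFC.sqrt A with hs_def
  have hA' : IsSelfAdjoint A := hA.isSelfAdjoint
  have hs_nonneg : (0 : H →L[ℂ] H) ≤ s := CFC.sqrt_nonneg A
  have hs' : IsSelfAdjoint s := hs_nonneg.isSelfAdjoint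
  have hss : s * s = A := CFC.sqrt_mul_sqrt_self A hA
  -- decomposition of the squared norm along the projections
  have hdecR : ∀ x : H, ∑ j, ‖P j x‖ ^ 2 = ‖x‖ ^ 2 := by
    intro x
    have h1 : ∀ j, (RCLike.re : ℂ →+ ℝ) (@inner ℂ _ _ x (P j x)) = ‖P j x‖ ^ 2 := by
      intro j
      have hadj : ContinuousLinearMap.adjoint (P j) = P j := by
        rw [← ContinuousLinearMap.star_eq_adjoint, (hsa j).star_eq]
      have hPP : (P j) ((P j) x) = (P j) x := by
        conv_rhs => rw [← (hidem j).eq]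
        rfl
      have e : @inner ℂ _ _ x (P j x) = @inner ℂ _ _ (P j x) (P j x) := by
        conv_lhs => rw [← hPP]
        rw [← ContinuousLinearMap.adjoint_inner_left, hadj]
      rw [e]
      exact inner_self_eq_norm_sq _
    calc ∑ j, ‖P j x‖ ^ 2
        = ∑ j, (RCLike.re : ℂ →+ ℝ) (@inner ℂ _ _ x (P j x)) :=
          Finset.sum_congr rfl fun j _ => (h1 j).symm
      _ = (RCLike.re : ℂ →+ ℝ) (∑ j, @inner ℂ _ _ x (P j x)) := (map_sum _ _ _).symm
      _ = (RCLike.re : ℂ →+ ℝ) (@inner ℂ _ _ x x) := by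
          rw [← inner_sum]
          rw [← ContinuousLinearMap.sum_apply, hsum]
          norm_num
      _ = ‖x‖ ^ 2 := inner_self_eq_norm_sq x
  have hdecE : ∀ x : H, (‖x‖₊ : ℝ≥0∞) ^ 2 = ∑ j, (‖P j x‖₊ : ℝ≥0∞) ^ 2 := by
    intro x
    calc (‖x‖₊ : ℝ≥0∞) ^ 2 = ENNReal.ofReal (‖x‖ ^ 2) := by
          rw [ENNReal.ofReal_pow (norm_nonneg _), ofReal_norm, enorm_eq_nnnorm]
      _ = ENNReal.ofReal (∑ j, ‖P j x‖ ^ 2) := by rw [hdecR x]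
      _ = ∑ j, ENNReal.ofReal (‖P j x‖ ^ 2) :=
          ENNReal.ofReal_sum_of_nonneg (fun j _ => by positivity)
      _ = ∑ j, (‖P j x‖₊ : ℝ≥0∞) ^ 2 := Finset.sum_congr rfl fun j _ => by
          rw [ENNReal.ofReal_pow (norm_nonneg _), ofReal_norm, enorm_eq_nnnorm]
  have hsplit : ∀ T : H →L[ℂ] H, HSB.sE b T = ∑ j, HSB.sE b (P j * T) := by
    intro T
    calc HSB.sE b T = ∑' i, ∑ j, (‖P j (T (b i))‖₊ : ℝ≥0∞) ^ 2 :=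
          tsum_congr fun i => hdecE (T (b i))
      _ = ∑ j, ∑' i, (‖P j (T (b i))‖₊ : ℝ≥0∞) ^ 2 :=
          Summable.tsum_finsetSum (fun j _ => ENNReal.summable)
      _ = ∑ j, HSB.sE b (P j * T) := rfl
  have hflip : ∀ j, HSB.sE b (P j * A) = HSB.sE b (A * P j) := by
    intro j
    have hadj : ContinuousLinearMap.adjoint (P j * A) = A * P j := by
      rw [← ContinuousLinearMap.star_eq_adjoint, star_mul, (hsa j).star_eq, hA'.star_eq]
    rw [← hadj, HSB.sE_adjoint]
  have hEA : HSB.sE b A = ∑ j, HSB.sE b (A * P j) := by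
    rw [hsplit A]
    exact Finset.sum_congr rfl fun j _ => hflip j
  -- the block identity
  have hBD : ∀ j, HSB.sE b (s * (P j * s)) = HSB.sE b (P j * (A * P j)) := by
    intro j
    have hD : (0 : H →L[ℂ] H) ≤ P j * (A * P j) := by
      have h := star_left_conjugate_nonneg hA (P j)
      rwa [(hsa j).star_eq, mul_assoc] at h
    set r : H →L[ℂ] H := CFC.sqrt (P j * (A * P j)) with hrdef
    have hrr : r * r = P j * (A * P j) := CFC.sqrt_mul_sqrt_self _ hD
    have hr' : IsSelfAdjoint r := (CFC.sqrt_nonneg (a := P j * (A * P j))).isSelfAdjoint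
    have hD' : IsSelfAdjoint (P j * (A * P j)) := hD.isSelfAdjoint
    have hs2 : ∀ X : H →L[ℂ] H, s * (s * X) = A * X := fun X => by rw [← mul_assoc, hss]
    have hP2 : ∀ X : H →L[ℂ] H, P j * (P j * X) = P j * X := fun X => by
      rw [← mul_assoc, (hidem j).eq]
    have hr2 : ∀ X : H →L[ℂ] H, r * (r * X) = P j * (A * (P j * X)) := fun X => by
      rw [← mul_assoc, hrr]
      simp only [mul_assoc]
    have k1 : star (r * (P j * s)) * (r * (P j * s))
        = star (s * (P j * s)) * (s * (P j * s)) := by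
      simp only [star_mul, hs'.star_eq, (hsa j).star_eq, hr'.star_eq, mul_assoc]
      simp only [hr2, hs2, hP2]
    have k2 : (r * (P j * s)) * star (r * (P j * s))
        = star (P j * (A * P j)) * (P j * (A * P j)) := by
      rw [hD'.star_eq, ← hrr]
      simp only [star_mul, hs'.star_eq, (hsa j).star_eq, hr'.star_eq, mul_assoc]
      simp only [hs2]
      rw [← hr2]
    have e1 : ∀ x, ‖(r * (P j * s)) x‖ = ‖(s * (P j * s)) x‖ := fun x =>
      HSB.norm_apply_eq_of_star_mul_self _ _ k1 x
    have e2 : ∀ x, ‖(star (r * (P j * s))) x‖ = ‖(P j * (A * P j)) x‖ := fun x =>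
      HSB.norm_apply_eq_of_star_mul_self _ _ (by rw [star_star]; exact k2) x
    calc HSB.sE b (s * (P j * s)) = HSB.sE b (r * (P j * s)) :=
          (HSB.sE_congr_norm b _ _ e1).symm
      _ = HSB.sE b (ContinuousLinearMap.adjoint (r * (P j * s))) := (HSB.sE_adjoint b _).symm
      _ = HSB.sE b (star (r * (P j * s))) := by rw [ContinuousLinearMap.star_eq_adjoint]
      _ = HSB.sE b (P j * (A * P j)) := HSB.sE_congr_norm b _ _ e2
  have hterm : ∀ j, HSB.sE b (P j * (A * P j)) ≤ HSB.sE b (A * P j) := by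
    intro j
    rw [hsplit (A * P j)]
    exact Finset.single_le_sum (f := fun k => HSB.sE b (P k * (A * P j)))
      (fun k _ => zero_le) (Finset.mem_univ j)
  have hupE : ∑ j, HSB.sE b (s * (P j * s)) ≤ HSB.sE b A := by
    rw [hEA]
    refine Finset.sum_le_sum fun j _ => ?_
    rw [hBD j]
    exact hterm j
  have hfinA : HSB.sE b A ≠ ⊤ := HSB.sE_ne_top_of_summable b A hHS
  have hBle : ∀ j, HSB.sE b (s * (P j * s)) ≤ HSB.sE b A := by
    intro j
    rw [hBD j, hEA]
    exact le_trans (hterm j) (Finset.single_le_sum (f := fun k => HSB.sE b (A * P k))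
      (fun k _ => zero_le) (Finset.mem_univ j))
  have hfinB : ∀ j, HSB.sE b (s * (P j * s)) ≠ ⊤ := fun j => ne_top_of_le_ne_top hfinA (hBle j)
  have hsumB : ∀ j, Summable (fun i => ‖(s * (P j * s)) (b i)‖ ^ 2) := fun j =>
    HSB.summable_of_sE_ne_top b _ (hfinB j)
  have htsB : ∀ j, ∑' i, ‖(s * (P j * s)) (b i)‖ ^ 2 = (HSB.sE b (s * (P j * s))).toReal :=
    fun j => HSB.tsum_sq_eq_toReal b _ (hfinB j)
  have htsA : ∑' i, ‖A (b i)‖ ^ 2 = (HSB.sE b A).toReal := HSB.tsum_sq_eq_toReal b A hfinA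
  have hupper : ∑ j, ∑' i, ‖(s * (P j * s)) (b i)‖ ^ 2 ≤ ∑' i, ‖A (b i)‖ ^ 2 := by
    rw [htsA]
    calc ∑ j, ∑' i, ‖(s * (P j * s)) (b i)‖ ^ 2
        = ∑ j, (HSB.sE b (s * (P j * s))).toReal := Finset.sum_congr rfl fun j _ => htsB j
      _ = (∑ j, HSB.sE b (s * (P j * s))).toReal := (ENNReal.toReal_sum fun j _ => hfinB j).symm
      _ ≤ (HSB.sE b A).toReal := ENNReal.toReal_mono hfinA hupE
  -- lower bound
  have hsum' : ∑ j, s * (P j * s) = A := by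
    rw [← Finset.mul_sum, ← Finset.sum_mul, hsum, one_mul, hss]
  have hN' : (0 : ℝ) < N := by exact_mod_cast hN
  have hpoint : ∀ i, ‖A (b i)‖ ^ 2 ≤ (N : ℝ) * ∑ j, ‖(s * (P j * s)) (b i)‖ ^ 2 := by
    intro i
    have hx : A (b i) = ∑ j, (s * (P j * s)) (b i) := by
      rw [← hsum']
      simp
    calc ‖A (b i)‖ ^ 2 = ‖∑ j, (s * (P j * s)) (b i)‖ ^ 2 := by rw [hx]
      _ ≤ (∑ j, ‖(s * (P j * s)) (b i)‖) ^ 2 := by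
          have h := norm_sum_le Finset.univ (fun j => (s * (P j * s)) (b i))
          exact pow_le_pow_left₀ (norm_nonneg _) h 2
      _ ≤ ((Finset.univ : Finset (Fin N)).card : ℝ) * ∑ j, ‖(s * (P j * s)) (b i)‖ ^ 2 :=
          sq_sum_le_card_mul_sum_sq
      _ = (N : ℝ) * ∑ j, ‖(s * (P j * s)) (b i)‖ ^ 2 := by
          simp [Finset.card_univ]
  have hsummR : Summable (fun i => (N : ℝ) * ∑ j, ‖(s * (P j * s)) (b i)‖ ^ 2) :=
    (summable_sum (fun j _ => hsumB j)).mul_left _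
  have hlow1 : ∑' i, ‖A (b i)‖ ^ 2 ≤ (N : ℝ) * ∑ j, ∑' i, ‖(s * (P j * s)) (b i)‖ ^ 2 := by
    calc ∑' i, ‖A (b i)‖ ^ 2 ≤ ∑' i, (N : ℝ) * ∑ j, ‖(s * (P j * s)) (b i)‖ ^ 2 :=
          Summable.tsum_le_tsum hpoint hHS hsummR
      _ = (N : ℝ) * ∑' i, ∑ j, ‖(s * (P j * s)) (b i)‖ ^ 2 := tsum_mul_left
      _ = (N : ℝ) * ∑ j, ∑' i, ‖(s * (P j * s)) (b i)‖ ^ 2 := by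
          rw [Summable.tsum_finsetSum (fun j _ => hsumB j)]
  constructor
  · have h := mul_le_mul_of_nonneg_left hlow1 (le_of_lt (by positivity : (0:ℝ) < 1 / N))
    rwa [← mul_assoc, one_div_mul_cancel hN'.ne', one_mul] at h
  · exact hupper
end
end

section
/- Let A be a positive Hilbert-Schmidt operator and P_1,…,P_N orthogonal projections with pairwise orthogonal ranges summing to I. If ∑_{j=1}^N ‖A^{1/2} P_j A^{1/2}‖₂² = ‖A‖₂², then A commutes with every P_j (equivalently A = ∑_j P_j A P_j). -/
set_option synthInstance.maxHeartbeats 1000000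
set_option maxHeartbeats 1000000

noncomputable section

variable {H : Type*} [NormedAddCommGroup H] [InnerProductSpace ℂ H] [CompleteSpace H]

namespace HSBlockAux

open ContinuousLinearMap
open scoped ENNReal

/-- If `X†X = Y†Y` then `X` and `Y` have the same pointwise norms. -/
lemma norm_apply_eq_of_adj_comp_eq {X Y : H →L[ℂ] H}
    (h : adjoint X * X = adjoint Y * Y) (v : H) : ‖X v‖ = ‖Y v‖ := by
  have hx : (inner ℂ (X v) (X v) : ℂ) = inner ℂ (Y v) (Y v) := by
    have h1 : (inner ℂ ((adjoint X * X) v) v : ℂ) = inner ℂ (X v) (X v) := by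
      rw [mul_apply_eq_comp, adjoint_inner_left]
    have h2 : (inner ℂ ((adjoint Y * Y) v) v : ℂ) = inner ℂ (Y v) (Y v) := by
      rw [mul_apply_eq_comp, adjoint_inner_left]
    rw [← h1, ← h2, h]
  rw [inner_self_eq_norm_sq_to_K, inner_self_eq_norm_sq_to_K] at hx
  have h2 : (‖X v‖ : ℝ) ^ 2 = ‖Y v‖ ^ 2 := by exact_mod_cast hx
  nlinarith [norm_nonneg (X v), norm_nonneg (Y v)]

variable {ι : Type*} (b : HilbertBasis ι ℂ H)

/-- Parseval. -/
lemma parseval (x : H) :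
    HasSum (fun i => ‖(inner ℂ (b i) x : ℂ)‖ ^ 2) (‖x‖ ^ 2) := by
  have h := b.hasSum_inner_mul_inner x x
  have h2 : ∀ i, (inner ℂ x (b i) : ℂ) * inner ℂ (b i) x
      = (((‖(inner ℂ (b i) x : ℂ)‖ ^ 2 : ℝ)) : ℂ) := by
    intro i
    rw [← inner_conj_symm (b i) x, RCLike.mul_conj, RCLike.norm_conj]
    norm_cast
  have hxx : (inner ℂ x x : ℂ) = (((‖x‖ ^ 2 : ℝ)) : ℂ) := by
    rw [inner_self_eq_norm_sq_to_K]; norm_cast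
  simp only [h2, hxx] at h
  exact Complex.hasSum_ofReal.mp h

/-- The Hilbert–Schmidt "norm squared" as an extended real. -/
def J (T : H →L[ℂ] H) : ℝ≥0∞ := ∑' i, ENNReal.ofReal (‖T (b i)‖ ^ 2)

lemma ofReal_tsum_eq_J (T : H →L[ℂ] H) (h : Summable fun i => ‖T (b i)‖ ^ 2) :
    ENNReal.ofReal (∑' i, ‖T (b i)‖ ^ 2) = J b T := by
  rw [J, ENNReal.ofReal_tsum_of_nonneg (fun i => sq_nonneg _) h]

lemma summable_of_J_ne_top (T : H →L[ℂ] H) (h : J b T ≠ ⊤) :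
    Summable fun i => ‖T (b i)‖ ^ 2 := by
  have := ENNReal.summable_toReal h
  refine this.congr fun i => ?_
  rw [ENNReal.toReal_ofReal (sq_nonneg _)]

lemma J_eq_double (T : H →L[ℂ] H) :
    J b T = ∑' (m : ι) (i : ι), ENNReal.ofReal (‖(inner ℂ (b m) (T (b i)) : ℂ)‖ ^ 2) := by
  rw [J]
  have h1 : ∀ i, ENNReal.ofReal (‖T (b i)‖ ^ 2)
      = ∑' m, ENNReal.ofReal (‖(inner ℂ (b m) (T (b i)) : ℂ)‖ ^ 2) := by
    intro i
    have hp := parseval b (T (b i))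
    rw [← hp.tsum_eq, ENNReal.ofReal_tsum_of_nonneg (fun m => sq_nonneg _) hp.summable]
  rw [tsum_congr h1, ENNReal.tsum_comm]

/-- The HS norm of the adjoint equals that of the operator. -/
lemma J_adjoint (T : H →L[ℂ] H) : J b T = J b (adjoint T) := by
  rw [J_eq_double b T]
  have h1 : ∀ m, (∑' i, ENNReal.ofReal (‖(inner ℂ (b m) (T (b i)) : ℂ)‖ ^ 2))
      = ENNReal.ofReal (‖(adjoint T) (b m)‖ ^ 2) := by
    intro m
    have hp := parseval b ((adjoint T) (b m))
    have h2 : ∀ i, ‖(inner ℂ (b m) (T (b i)) : ℂ)‖ = ‖(inner ℂ (b i) ((adjoint T) (b m)) : ℂ)‖ := by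
      intro i
      rw [← adjoint_inner_left T (b i) (b m)]
      exact (norm_inner_symm _ _).symm
    calc (∑' i, ENNReal.ofReal (‖(inner ℂ (b m) (T (b i)) : ℂ)‖ ^ 2))
        = ∑' i, ENNReal.ofReal (‖(inner ℂ (b i) ((adjoint T) (b m)) : ℂ)‖ ^ 2) := by
          refine tsum_congr fun i => ?_; rw [h2]
      _ = ENNReal.ofReal (‖(adjoint T) (b m)‖ ^ 2) := by
          rw [← ENNReal.ofReal_tsum_of_nonneg (fun i => sq_nonneg _) hp.summable, hp.tsum_eq]
  rw [tsum_congr h1]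
  rfl

lemma J_congr {T U : H →L[ℂ] H} (h : ∀ v, ‖T v‖ = ‖U v‖) : J b T = J b U := by
  unfold J
  exact tsum_congr fun i => by rw [h]

variable {N : ℕ} (P : Fin N → H →L[ℂ] H)

/-- Pythagoras for a family of idempotent self-adjoint operators summing to 1. -/
lemma pyth (hsa : ∀ j, IsSelfAdjoint (P j)) (hidem : ∀ j, IsIdempotentElem (P j))
    (hsum : ∑ j, P j = 1) (v : H) :
    ∑ j, ‖P j v‖ ^ 2 = ‖v‖ ^ 2 := by
  have hv : ∑ j, P j v = v := by
    have := congrArg (fun T : H →L[ℂ] H => T v) hsum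
    simpa using this
  have h1 : ∀ j, (inner ℂ (P j v) v : ℂ) = (((‖P j v‖ ^ 2 : ℝ)) : ℂ) := by
    intro j
    have e1 : P j (P j v) = P j v := by
      conv_rhs => rw [← (hidem j).eq]
      rfl
    calc (inner ℂ (P j v) v : ℂ) = inner ℂ (P j (P j v)) v := by rw [e1]
      _ = inner ℂ (P j v) (P j v) := by
          have h := adjoint_inner_left (P j) v (P j v)
          rw [← star_eq_adjoint, (hsa j).star_eq] at h
          exact h
      _ = (((‖P j v‖ ^ 2 : ℝ)) : ℂ) := by rw [inner_self_eq_norm_sq_to_K]; norm_cast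
  have h2 : (((∑ j, ‖P j v‖ ^ 2 : ℝ)) : ℂ) = (((‖v‖ ^ 2 : ℝ)) : ℂ) := by
    calc (((∑ j, ‖P j v‖ ^ 2 : ℝ)) : ℂ) = ∑ j, (((‖P j v‖ ^ 2 : ℝ)) : ℂ) := by push_cast; rfl
      _ = ∑ j, (inner ℂ (P j v) v : ℂ) := by
          refine Finset.sum_congr rfl fun j _ => (h1 j).symm
      _ = (inner ℂ (∑ j, P j v) v : ℂ) := (sum_inner _ _ _).symm
      _ = (inner ℂ v v : ℂ) := by rw [hv]
      _ = (((‖v‖ ^ 2 : ℝ)) : ℂ) := by rw [inner_self_eq_norm_sq_to_K]; norm_cast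
  exact_mod_cast h2

lemma J_split (hsa : ∀ j, IsSelfAdjoint (P j)) (hidem : ∀ j, IsIdempotentElem (P j))
    (hsum : ∑ j, P j = 1) (T : H →L[ℂ] H) :
    J b T = ∑ j, J b (P j * T) := by
  unfold J
  have h1 : ∀ i, ENNReal.ofReal (‖T (b i)‖ ^ 2)
      = ∑ j, ENNReal.ofReal (‖(P j * T) (b i)‖ ^ 2) := by
    intro i
    rw [← ENNReal.ofReal_sum_of_nonneg (fun j _ => sq_nonneg _)]
    congr 1
    simp only [mul_apply_eq_comp]
    exact (pyth P hsa hidem hsum (T (b i))).symm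
  rw [tsum_congr h1, Summable.tsum_finsetSum fun j _ => ENNReal.summable]

end HSBlockAux

open ContinuousLinearMap HSBlockAux in
/-- equality in the upper HS bound forces block-diagonality. -/
theorem hs_equality_block_diagonal {ι : Type*} (b : HilbertBasis ι ℂ H)
    {N : ℕ} (P : Fin N → H →L[ℂ] H)
    (hsa : ∀ j, IsSelfAdjoint (P j)) (hidem : ∀ j, IsIdempotentElem (P j))
    (horth : ∀ j j', j ≠ j' → P j * P j' = 0)
    (hsum : ∑ j, P j = 1)
    (A : H →L[ℂ] H) (hA : 0 ≤ A)
    (hHS : Summable fun i => ‖A (b i)‖ ^ 2)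
    (heq : ∑ j, ∑' i, ‖(CFC.sqrt A * P j * CFC.sqrt A) (b i)‖ ^ 2
      = ∑' i, ‖A (b i)‖ ^ 2) :
    (∀ j, A * P j = P j * A) ∧ A = ∑ j, P j * A * P j := by
  classical
  set S := CFC.sqrt A with hSdef
  have hAsa : IsSelfAdjoint A := hA.isSelfAdjoint
  have hSnn : 0 ≤ S := CFC.sqrt_nonneg _
  have hSsa : IsSelfAdjoint S := hSnn.isSelfAdjoint
  have hSS : S * S = A := CFC.sqrt_mul_sqrt_self A hA
  set D : Fin N → H →L[ℂ] H := fun j => P j * A * P j with hDdef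
  have hDnn : ∀ j, 0 ≤ D j := by
    intro j
    have := star_left_conjugate_nonneg hA (P j)
    rwa [(hsa j).star_eq] at this
  have hDsa : ∀ j, IsSelfAdjoint (D j) := fun j => (hDnn j).isSelfAdjoint
  set R : Fin N → H →L[ℂ] H := fun j => CFC.sqrt (D j) with hRdef
  have hRnn : ∀ j, 0 ≤ R j := fun j => CFC.sqrt_nonneg _
  have hRsa : ∀ j, IsSelfAdjoint (R j) := fun j => (hRnn j).isSelfAdjoint
  have hRR : ∀ j, R j * R j = D j := fun j => CFC.sqrt_mul_sqrt_self (D j) (hDnn j)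
  have hRR' : ∀ j, R j * R j = P j * A * P j := hRR
  -- D j * P j = D j and R j * P j = R j, P j * R j = R j
  have hDP : ∀ j, D j * P j = D j := by
    intro j
    show P j * A * P j * P j = P j * A * P j
    rw [mul_assoc, (hidem j).eq]
  have hRP : ∀ j, R j * P j = R j := by
    intro j
    ext w
    have h1 : D j (w - P j w) = 0 := by
      have := congrArg (fun T : H →L[ℂ] H => T w) (hDP j)
      simp only [mul_apply_eq_comp] at this
      simp [map_sub, this]
    have h2 : (inner ℂ (R j (w - P j w)) (R j (w - P j w)) : ℂ) = 0 := by
      have h3 : (inner ℂ ((R j * R j) (w - P j w)) (w - P j w) : ℂ)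
          = inner ℂ (R j (w - P j w)) (R j (w - P j w)) := by
        rw [mul_apply_eq_comp]
        have h := adjoint_inner_left (R j) (w - P j w) (R j (w - P j w))
        rw [← star_eq_adjoint, (hRsa j).star_eq] at h
        exact h
      rw [← h3, hRR j, h1, inner_zero_left]
    have h4 : R j (w - P j w) = 0 := inner_self_eq_zero.mp h2
    have h5 : R j w - R j (P j w) = 0 := by rw [← map_sub]; exact h4
    have h6 : R j (P j w) = R j w := by
      have := sub_eq_zero.mp h5
      exact this.symm
    simpa [mul_apply_eq_comp] using h6
  have hPR : ∀ j, P j * R j = R j := by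
    intro j
    calc P j * R j = star (R j * P j) := by rw [star_mul, (hsa j).star_eq, (hRsa j).star_eq]
      _ = star (R j) := by rw [hRP j]
      _ = R j := (hRsa j).star_eq
  -- pointwise norm identities
  have key1 : ∀ j v, ‖(S * P j * S) v‖ = ‖(R j * S) v‖ := by
    intro j v
    refine norm_apply_eq_of_adj_comp_eq ?_ v
    have ha1 : adjoint (S * P j * S) = S * P j * S := by
      rw [← star_eq_adjoint]
      simp only [star_mul, hSsa.star_eq, (hsa j).star_eq, mul_assoc]
    have ha2 : adjoint (R j * S) = S * R j := by
      rw [← star_eq_adjoint, star_mul, hSsa.star_eq, (hRsa j).star_eq]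
    rw [ha1, ha2]
    calc (S * P j * S) * (S * P j * S) = S * (P j * (S * S) * P j) * S := by
          simp only [mul_assoc]
      _ = S * (P j * A * P j) * S := by rw [hSS]
      _ = S * (R j * R j) * S := by rw [hRR' j]
      _ = (S * R j) * (R j * S) := by simp only [mul_assoc]
  have key2 : ∀ j v, ‖(S * R j) v‖ = ‖D j v‖ := by
    intro j v
    refine norm_apply_eq_of_adj_comp_eq ?_ v
    have ha2 : adjoint (S * R j) = R j * S := by
      rw [← star_eq_adjoint, star_mul, hSsa.star_eq, (hRsa j).star_eq]
    have ha3 : adjoint (D j) = D j := by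
      rw [← star_eq_adjoint]; exact (hDsa j).star_eq
    rw [ha2, ha3]
    calc (R j * S) * (S * R j) = R j * (S * S) * R j := by simp only [mul_assoc]
      _ = R j * A * R j := by rw [hSS]
      _ = (R j * P j) * A * (P j * R j) := by rw [hRP j, hPR j]
      _ = R j * (P j * A * P j) * R j := by simp only [mul_assoc]
      _ = R j * (R j * R j) * R j := by rw [hRR' j]
      _ = (R j * R j) * (R j * R j) := by simp only [mul_assoc]
      _ = D j * D j := by rw [hRR j]
  have hJB : ∀ j, J b (S * P j * S) = J b (D j) := by
    intro j
    calc J b (S * P j * S) = J b (R j * S) := J_congr b (key1 j)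
      _ = J b (adjoint (R j * S)) := J_adjoint b _
      _ = J b (S * R j) := by
          rw [← star_eq_adjoint, star_mul, hSsa.star_eq, (hRsa j).star_eq]
      _ = J b (D j) := J_congr b (key2 j)
  -- expansion of J A
  have hsplit : ∀ T, J b T = ∑ j, J b (P j * T) := J_split b P hsa hidem hsum
  have hadjPA : ∀ j, adjoint (P j * A) = A * P j := by
    intro j
    rw [← star_eq_adjoint, star_mul, (hsa j).star_eq, hAsa.star_eq]
  have hJA : J b A = ∑ j, ∑ k, J b (P k * (A * P j)) := by
    calc J b A = ∑ j, J b (P j * A) := hsplit A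
      _ = ∑ j, J b (A * P j) := by
          refine Finset.sum_congr rfl fun j _ => ?_
          rw [J_adjoint b (P j * A), hadjPA j]
      _ = ∑ j, ∑ k, J b (P k * (A * P j)) := by
          exact Finset.sum_congr rfl fun j _ => hsplit (A * P j)
  have hdiag : ∀ j, P j * (A * P j) = D j := by
    intro j
    show P j * (A * P j) = P j * A * P j
    rw [mul_assoc]
  have hJAfin : J b A ≠ ⊤ := by
    rw [← ofReal_tsum_eq_J b A hHS]
    exact ENNReal.ofReal_ne_top
  have hterm_fin : ∀ j k, J b (P k * (A * P j)) ≠ ⊤ := by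
    intro j k
    have h1 : J b (P k * (A * P j)) ≤ J b A := by
      rw [hJA]
      calc J b (P k * (A * P j)) ≤ ∑ k', J b (P k' * (A * P j)) :=
            Finset.single_le_sum (f := fun k' => J b (P k' * (A * P j)))
              (fun _ _ => zero_le) (Finset.mem_univ k)
        _ ≤ ∑ j', ∑ k', J b (P k' * (A * P j')) :=
            Finset.single_le_sum (f := fun j' => ∑ k', J b (P k' * (A * P j')))
              (fun _ _ => zero_le) (Finset.mem_univ j)
    exact fun h => hJAfin (top_le_iff.mp (h ▸ h1))
  have hDfin : ∀ j, J b (D j) ≠ ⊤ := by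
    intro j
    rw [← hdiag j]
    exact hterm_fin j j
  -- convert heq into ENNReal
  have hBsummable : ∀ j, Summable fun i => ‖(S * P j * S) (b i)‖ ^ 2 := by
    intro j
    refine summable_of_J_ne_top b _ ?_
    rw [hJB j]
    exact hDfin j
  have heq' : ∑ j, J b (S * P j * S) = J b A := by
    have h0 := congrArg ENNReal.ofReal heq
    rw [ENNReal.ofReal_sum_of_nonneg (fun j _ => tsum_nonneg fun i => sq_nonneg _)] at h0
    rw [ofReal_tsum_eq_J b A hHS] at h0
    calc ∑ j, J b (S * P j * S)
        = ∑ j, ENNReal.ofReal (∑' i, ‖(S * P j * S) (b i)‖ ^ 2) := by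
          refine Finset.sum_congr rfl fun j _ => ?_
          rw [ofReal_tsum_eq_J b _ (hBsummable j)]
      _ = J b A := h0
  -- derive vanishing of the off-diagonal blocks
  have hsum_eq : ∑ j, ∑ k, J b (P k * (A * P j)) = ∑ j, J b (D j) := by
    rw [← hJA, ← heq']
    exact Finset.sum_congr rfl fun j _ => hJB j
  have hsplit_inner : ∀ j, ∑ k, J b (P k * (A * P j))
      = J b (D j) + ∑ k ∈ Finset.univ.erase j, J b (P k * (A * P j)) := by
    intro j
    rw [← Finset.add_sum_erase Finset.univ _ (Finset.mem_univ j), hdiag j]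
  have hoffzero : ∀ j, ∑ k ∈ Finset.univ.erase j, J b (P k * (A * P j)) = 0 := by
    have h1 : ∑ j, (J b (D j) + ∑ k ∈ Finset.univ.erase j, J b (P k * (A * P j)))
        = ∑ j, J b (D j) := by
      rw [← hsum_eq]
      exact (Finset.sum_congr rfl fun j _ => (hsplit_inner j).symm)
    rw [Finset.sum_add_distrib] at h1
    have h2 : ∑ j, J b (D j) ≠ ⊤ := by
      intro h
      rw [ENNReal.sum_eq_top] at h
      obtain ⟨j, _, hj⟩ := h
      exact hDfin j hj
    have h3 : ∑ j, ∑ k ∈ Finset.univ.erase j, J b (P k * (A * P j)) = 0 := by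
      have := h1
      nth_rewrite 2 [← add_zero (∑ j, J b (D j))] at this
      exact (ENNReal.add_right_inj h2).mp this
    intro j
    exact (Finset.sum_eq_zero_iff.mp h3) j (Finset.mem_univ j)
  have hcross : ∀ j k, k ≠ j → P k * (A * P j) = 0 := by
    intro j k hkj
    have h0 : J b (P k * (A * P j)) = 0 := by
      have := hoffzero j
      exact (Finset.sum_eq_zero_iff.mp this) k (Finset.mem_erase.mpr ⟨hkj, Finset.mem_univ k⟩)
    have h1 : ∀ i, (P k * (A * P j)) (b i) = 0 := by
      intro i
      have h2 := (ENNReal.tsum_eq_zero.mp h0) i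
      rw [ENNReal.ofReal_eq_zero] at h2
      have h3 : ‖(P k * (A * P j)) (b i)‖ ^ 2 = 0 := le_antisymm h2 (sq_nonneg _)
      have h4 : ‖(P k * (A * P j)) (b i)‖ = 0 := by
        nlinarith [norm_nonneg ((P k * (A * P j)) (b i))]
      exact norm_eq_zero.mp h4
    have hdense : Dense ((Submodule.span ℂ (Set.range b) : Submodule ℂ H) : Set H) := by
      rw [Submodule.dense_iff_topologicalClosure_eq_top]
      exact b.dense_span
    refine ContinuousLinearMap.ext_on hdense ?_
    rintro _ ⟨i, rfl⟩
    simp [h1 i]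
  -- conclusions
  have hAPj : ∀ j, A * P j = D j := by
    intro j
    calc A * P j = 1 * (A * P j) := (one_mul _).symm
      _ = (∑ k, P k) * (A * P j) := by rw [hsum]
      _ = ∑ k, P k * (A * P j) := Finset.sum_mul _ _ _
      _ = P j * (A * P j) := by
          refine Finset.sum_eq_single j (fun k _ hkj => hcross j k hkj) ?_
          intro h
          exact absurd (Finset.mem_univ j) h
      _ = D j := hdiag j
  have hPjA : ∀ j, P j * A = D j := by
    intro j
    calc P j * A = star (A * P j) := by rw [star_mul, (hsa j).star_eq, hAsa.star_eq]
      _ = star (D j) := by rw [hAPj j]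
      _ = D j := (hDsa j).star_eq
  constructor
  · intro j
    rw [hAPj j, hPjA j]
  · calc A = A * 1 := (mul_one A).symm
      _ = A * ∑ j, P j := by rw [hsum]
      _ = ∑ j, A * P j := Finset.mul_sum _ _ _
      _ = ∑ j, P j * A * P j := by
          refine Finset.sum_congr rfl fun j _ => ?_
          rw [hAPj j]
end
end

section
/- Let R be a positive trace-class operator on a Hilbert space H and P_1,…,P_N orthogonal projections with pairwise orthogonal ranges summing to I. Define the HS-greedy sequence R^{(0)} = R, D_k = (R^{(k-1)})^{1/2} P_{j_k} (R^{(k-1)})^{1/2} where j_k maximizes the Hilbert-Schmidt norm ‖(R^{(k-1)})^{1/2} P_j (R^{(k-1)})^{1/2}‖₂ over j, and R^{(k)} = R^{(k-1)} − D_k. Then for every k ≥ 1, ‖R^{(k)}‖₂² ≤ (1 − 1/N²)^k ‖R‖₂². -/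
set_option synthInstance.maxHeartbeats 1000000
set_option maxHeartbeats 1000000

noncomputable section

variable {H : Type*} [NormedAddCommGroup H] [InnerProductSpace ℂ H] [CompleteSpace H]

namespace HSGreedyAux

local notation "⟪" x ", " y "⟫" => (inner ℂ x y : ℂ)

open scoped ENNReal

variable {ι : Type*} (b : HilbertBasis ι ℂ H)

lemma inner_self_re (x : H) : (⟪x, x⟫).re = ‖x‖ ^ 2 := by
  have := inner_self_eq_norm_sq (𝕜 := ℂ) (x := x)
  simpa using this

lemma inner_self_complex (x : H) : ⟪x, x⟫ = ((‖x‖ ^ 2 : ℝ) : ℂ) := by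
  have h := inner_self_eq_norm_sq_to_K (𝕜 := ℂ) x
  rw [h]
  norm_cast

lemma hasSum_inner_sq (x : H) :
    HasSum (fun i => ‖⟪b i, x⟫‖ ^ 2) (‖x‖ ^ 2) := by
  have h := b.hasSum_inner_mul_inner x x
  have h2 : (fun i => ⟪x, b i⟫ * ⟪b i, x⟫) = fun i => ((‖⟪b i, x⟫‖ ^ 2 : ℝ) : ℂ) := by
    funext i
    have hc : (inner ℂ x (b i) : ℂ) = (starRingEnd ℂ) (inner ℂ (b i) x) :=
      (inner_conj_symm x (b i)).symm
    rw [hc, RCLike.conj_mul]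
    norm_cast
  rw [h2, inner_self_complex] at h
  exact Complex.hasSum_ofReal.mp h

lemma sa_inner (T : H →L[ℂ] H) (hT : IsSelfAdjoint T) (x y : H) :
    ⟪T x, y⟫ = ⟪x, T y⟫ := by
  conv_lhs => rw [← hT.star_eq, ContinuousLinearMap.star_eq_adjoint]
  exact ContinuousLinearMap.adjoint_inner_left T y x

lemma pos_inner (T : H →L[ℂ] H) (hT : 0 ≤ T) (x : H) :
    0 ≤ (⟪x, T x⟫).re := by
  have := ((ContinuousLinearMap.nonneg_iff_isPositive T).mp hT).inner_nonneg_right x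
  simpa using (Complex.le_def.mp this).1

/-- cyclicity of the trace for Hilbert–Schmidt operators -/
lemma trace_comm (X Y : H →L[ℂ] H)
    (hX : Summable fun i => ‖X (b i)‖ ^ 2) (hY : Summable fun i => ‖Y (b i)‖ ^ 2) :
    ∑' i, ⟪b i, (X * Y) (b i)⟫ = ∑' i, ⟪b i, (Y * X) (b i)⟫ := by
  classical
  set f : ι → ι → ℂ := fun i j => ⟪b i, X (b j)⟫ * ⟪b j, Y (b i)⟫ with hfdef
  have h1 : ∀ i, HasSum (fun j => f i j) ⟪b i, (X * Y) (b i)⟫ := by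
    intro i
    have h := b.hasSum_inner_mul_inner (ContinuousLinearMap.adjoint X (b i)) (Y (b i))
    simp only [ContinuousLinearMap.adjoint_inner_left] at h
    simpa [f, ContinuousLinearMap.mul_apply] using h
  have h2 : ∀ j, HasSum (fun i => f i j) ⟪b j, (Y * X) (b j)⟫ := by
    intro j
    have h := b.hasSum_inner_mul_inner (ContinuousLinearMap.adjoint Y (b j)) (X (b j))
    simp only [ContinuousLinearMap.adjoint_inner_left] at h
    have h' : (fun i => ⟪b j, Y (b i)⟫ * ⟪b i, X (b j)⟫) = fun i => f i j := by
      funext i; simp [f, mul_comm]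
    rw [h'] at h
    simpa [ContinuousLinearMap.mul_apply] using h
  -- summability over the product
  have hXsq : Summable (fun p : ι × ι => ‖⟪b p.1, X (b p.2)⟫‖ ^ 2) := by
    have h : Summable (fun p : ι × ι => ‖⟪b p.2, X (b p.1)⟫‖ ^ 2) := by
      refine (summable_prod_of_nonneg (fun p => by positivity)).mpr ⟨?_, ?_⟩
      · intro j
        exact (hasSum_inner_sq b (X (b j))).summable
      · refine hX.congr fun j => ?_
        exact (hasSum_inner_sq b (X (b j))).tsum_eq.symm
    have := h.prod_symm
    refine this.congr fun p => ?_
    rfl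
  have hYsq : Summable (fun p : ι × ι => ‖⟪b p.2, Y (b p.1)⟫‖ ^ 2) := by
    refine (summable_prod_of_nonneg (fun p => by positivity)).mpr ⟨?_, ?_⟩
    · intro i
      exact (hasSum_inner_sq b (Y (b i))).summable
    · refine hY.congr fun i => ?_
      exact (hasSum_inner_sq b (Y (b i))).tsum_eq.symm
  have huncurry : Summable (Function.uncurry f) := by
    refine Summable.of_norm ?_
    refine Summable.of_nonneg_of_le (fun p => norm_nonneg _) (fun p => ?_)
      (((hXsq.add hYsq).mul_left (1 / 2 : ℝ)))
    have hb : ‖Function.uncurry f p‖ = ‖⟪b p.1, X (b p.2)⟫‖ * ‖⟪b p.2, Y (b p.1)⟫‖ := by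
      simp [Function.uncurry, f]
    rw [hb]
    have := two_mul_le_add_sq ‖⟪b p.1, X (b p.2)⟫‖ ‖⟪b p.2, Y (b p.1)⟫‖
    linarith
  calc ∑' i, ⟪b i, (X * Y) (b i)⟫
      = ∑' i, ∑' j, f i j := tsum_congr fun i => (h1 i).tsum_eq.symm
    _ = ∑' j, ∑' i, f i j :=
        (huncurry.tsum_comm' (fun i => (h1 i).summable) (fun j => (h2 j).summable)).symm
    _ = ∑' j, ⟪b j, (Y * X) (b j)⟫ := tsum_congr fun j => (h2 j).tsum_eq

/-- HS-norm triangle inequality for finite sums, via `lp` spaces. -/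
lemma sqrt_tsum_sum_le {n : ℕ} (T : Fin n → H →L[ℂ] H)
    (hT : ∀ j, Summable fun i => ‖T j (b i)‖ ^ 2) :
    Real.sqrt (∑' i, ‖(∑ j, T j) (b i)‖ ^ 2)
      ≤ ∑ j, Real.sqrt (∑' i, ‖T j (b i)‖ ^ 2) := by
  classical
  have hp : (0:ℝ) < (2 : ℝ≥0∞).toReal := by simp
  have htr : ∀ x : ℝ, x ^ (2 : ℝ≥0∞).toReal = x ^ 2 := by
    intro x
    rw [show (2 : ℝ≥0∞).toReal = ((2 : ℕ) : ℝ) by simp, Real.rpow_natCast]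
  have mem : ∀ j, Memℓp (fun i => T j (b i)) 2 := by
    intro j
    exact memℓp_gen (by simpa only [htr] using hT j)
  set F : Fin n → lp (fun _ : ι => H) 2 := fun j => ⟨fun i => T j (b i), mem j⟩ with hF
  have hnorm : ∀ G : lp (fun _ : ι => H) 2, ‖G‖ ^ 2 = ∑' i, ‖G i‖ ^ 2 := by
    intro G
    have := lp.norm_rpow_eq_tsum hp G
    simpa only [htr] using this
  have hsumc : ∀ i, (∑ j, F j : lp (fun _ : ι => H) 2) i = (∑ j, T j) (b i) := by
    intro i
    rw [lp.coeFn_sum]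
    simp [F, ContinuousLinearMap.sum_apply]
  calc Real.sqrt (∑' i, ‖(∑ j, T j) (b i)‖ ^ 2)
      = Real.sqrt (‖(∑ j, F j : lp (fun _ : ι => H) 2)‖ ^ 2) := by
        rw [hnorm]
        congr 1
        exact tsum_congr fun i => by rw [hsumc i]
    _ = ‖(∑ j, F j : lp (fun _ : ι => H) 2)‖ := Real.sqrt_sq (norm_nonneg _)
    _ ≤ ∑ j, ‖F j‖ := norm_sum_le _ _
    _ = ∑ j, Real.sqrt (∑' i, ‖T j (b i)‖ ^ 2) := by
        refine Finset.sum_congr rfl fun j _ => ?_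
        rw [show (∑' i, ‖T j (b i)‖ ^ 2) = ‖F j‖ ^ 2 from (hnorm (F j)).symm,
          Real.sqrt_sq (norm_nonneg _)]

/-- conjugation of a projection by a self-adjoint operator is nonnegative -/
lemma conj_pos (S' Pj : H →L[ℂ] H) (hS' : IsSelfAdjoint S')
    (hPsa : IsSelfAdjoint Pj) (hPidem : Pj * Pj = Pj) :
    0 ≤ S' * Pj * S' := by
  have hfact : star (Pj * S') * (Pj * S') = S' * Pj * S' := by
    rw [star_mul, hS'.star_eq, hPsa.star_eq, ← mul_assoc, mul_assoc S' Pj Pj, hPidem]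
  rw [← hfact]
  exact star_mul_self_nonneg _

/-- The key single-step estimate. -/
lemma step_bound {N : ℕ} (hN : 0 < N) (P : Fin N → H →L[ℂ] H)
    (hsa : ∀ j, IsSelfAdjoint (P j)) (hidem : ∀ j, IsIdempotentElem (P j))
    (hsum : ∑ j, P j = 1)
    (A : H →L[ℂ] H) (hA : 0 ≤ A)
    (htcA : Summable fun i => (⟪b i, A (b i)⟫).re)
    (j : Fin N)
    (hg : ∀ j' : Fin N, ∑' i, ‖(CFC.sqrt A * P j' * CFC.sqrt A) (b i)‖ ^ 2
        ≤ ∑' i, ‖(CFC.sqrt A * P j * CFC.sqrt A) (b i)‖ ^ 2) :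
    ∑' i, ‖(A - CFC.sqrt A * P j * CFC.sqrt A) (b i)‖ ^ 2
      ≤ (1 - 1 / (N : ℝ) ^ 2) * ∑' i, ‖A (b i)‖ ^ 2 := by
  classical
  set S : H →L[ℂ] H := CFC.sqrt A with hSdef
  have hS : (0 : H →L[ℂ] H) ≤ S := CFC.sqrt_nonneg _
  have hSsa : IsSelfAdjoint S := IsSelfAdjoint.of_nonneg hS
  have hSS : S * S = A := CFC.sqrt_mul_sqrt_self A hA
  have hAsa : IsSelfAdjoint A := IsSelfAdjoint.of_nonneg hA
  set D : H →L[ℂ] H := S * P j * S with hDdef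
  have hD : (0 : H →L[ℂ] H) ≤ D := conj_pos S (P j) hSsa (hsa j) (hidem j)
  have hDsa : IsSelfAdjoint D := IsSelfAdjoint.of_nonneg hD
  set C : H →L[ℂ] H := A - D with hCdef
  have hQidem : (1 - P j) * (1 - P j) = 1 - P j := by
    rw [sub_mul, mul_sub, mul_sub, mul_one, one_mul, (hidem j).eq]
    abel
  have hCconj : C = S * (1 - P j) * S := by
    rw [hCdef, mul_sub, sub_mul, mul_one, hSS]
  have hC : (0 : H →L[ℂ] H) ≤ C := by
    rw [hCconj]
    exact conj_pos S (1 - P j) hSsa ((IsSelfAdjoint.one (H →L[ℂ] H)).sub (hsa j)) hQidem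
  have hCsa : IsSelfAdjoint C := IsSelfAdjoint.of_nonneg hC
  -- inner products through S
  have hA_apply : ∀ x : H, (⟪x, A x⟫) = ⟪S x, S x⟫ := by
    intro x
    have h := sa_inner S hSsa x (S x)
    rw [← hSS]
    simpa [ContinuousLinearMap.mul_apply] using h.symm
  have hS_hs : Summable fun i => ‖S (b i)‖ ^ 2 := by
    refine htcA.congr fun i => ?_
    rw [hA_apply (b i), inner_self_re]
  have hcomp_hs : ∀ C' T : H →L[ℂ] H, (Summable fun i => ‖T (b i)‖ ^ 2) →
      Summable fun i => ‖(C' * T) (b i)‖ ^ 2 := by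
    intro C' T hT
    refine Summable.of_nonneg_of_le (fun i => by positivity) (fun i => ?_) (hT.mul_left (‖C'‖ ^ 2))
    have h1 : ‖(C' * T) (b i)‖ ≤ ‖C'‖ * ‖T (b i)‖ := by
      simpa [ContinuousLinearMap.mul_apply] using C'.le_opNorm (T (b i))
    calc ‖(C' * T) (b i)‖ ^ 2 ≤ (‖C'‖ * ‖T (b i)‖) ^ 2 :=
          pow_le_pow_left₀ (norm_nonneg _) h1 2
      _ = ‖C'‖ ^ 2 * ‖T (b i)‖ ^ 2 := by ring
  have hA_hs : Summable fun i => ‖A (b i)‖ ^ 2 := by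
    have := hcomp_hs S S hS_hs
    rwa [hSS] at this
  have hSPS_hs : ∀ j' : Fin N, Summable fun i => ‖(S * P j' * S) (b i)‖ ^ 2 :=
    fun j' => hcomp_hs (S * P j') S hS_hs
  have hD_hs : Summable fun i => ‖D (b i)‖ ^ 2 := hSPS_hs j
  have hC_hs : Summable fun i => ‖C (b i)‖ ^ 2 := by
    refine Summable.of_nonneg_of_le (fun i => by positivity) (fun i => ?_)
      ((hA_hs.add hD_hs).mul_left 2)
    have h1 : ‖C (b i)‖ ≤ ‖A (b i)‖ + ‖D (b i)‖ := by
      rw [hCdef, ContinuousLinearMap.sub_apply]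
      exact norm_sub_le _ _
    have h2 : ‖C (b i)‖ ^ 2 ≤ (‖A (b i)‖ + ‖D (b i)‖) ^ 2 :=
      pow_le_pow_left₀ (norm_nonneg _) h1 2
    nlinarith [sq_nonneg (‖A (b i)‖ - ‖D (b i)‖)]
  -- sqrt of D
  set E : H →L[ℂ] H := CFC.sqrt D with hEdef
  have hE : (0 : H →L[ℂ] H) ≤ E := CFC.sqrt_nonneg _
  have hEsa : IsSelfAdjoint E := IsSelfAdjoint.of_nonneg hE
  have hEE : E * E = D := CFC.sqrt_mul_sqrt_self D hD
  have hD_apply : ∀ x : H, (⟪x, D x⟫) = ⟪E x, E x⟫ := by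
    intro x
    have h := sa_inner E hEsa x (E x)
    rw [← hEE]
    simpa [ContinuousLinearMap.mul_apply] using h.symm
  have hACD : ∀ x : H, (⟪x, A x⟫).re = (⟪x, C x⟫).re + (⟪x, D x⟫).re := by
    intro x
    have : A = C + D := by rw [hCdef]; abel
    rw [this]
    simp [ContinuousLinearMap.add_apply, inner_add_right]
  have hE_hs : Summable fun i => ‖E (b i)‖ ^ 2 := by
    have hsm : Summable fun i => (⟪b i, D (b i)⟫).re := by
      refine Summable.of_nonneg_of_le (fun i => pos_inner D hD _) (fun i => ?_) htcA
      have := pos_inner C hC (b i)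
      have := hACD (b i)
      linarith
    refine hsm.congr fun i => ?_
    rw [hD_apply (b i), inner_self_re]
  -- expansion of the square
  have hsub_apply : ∀ i, ‖(A - D) (b i)‖ ^ 2
      = ‖A (b i)‖ ^ 2 - 2 * (⟪A (b i), D (b i)⟫).re + ‖D (b i)‖ ^ 2 := by
    intro i
    rw [ContinuousLinearMap.sub_apply]
    simpa using norm_sub_sq (𝕜 := ℂ) (A (b i)) (D (b i))
  have hcross_summ : Summable fun i => (⟪A (b i), D (b i)⟫).re := by
    refine Summable.of_abs ?_
    refine Summable.of_nonneg_of_le (fun i => abs_nonneg _) (fun i => ?_)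
      ((hA_hs.add hD_hs).mul_left (1 / 2 : ℝ))
    have h1 : |(⟪A (b i), D (b i)⟫).re| ≤ ‖(⟪A (b i), D (b i)⟫)‖ := Complex.abs_re_le_norm _
    have h2 : ‖(⟪A (b i), D (b i)⟫)‖ ≤ ‖A (b i)‖ * ‖D (b i)‖ := norm_inner_le_norm _ _
    have := two_mul_le_add_sq ‖A (b i)‖ ‖D (b i)‖
    linarith
  have hexp : ∑' i, ‖(A - D) (b i)‖ ^ 2
      = (∑' i, ‖A (b i)‖ ^ 2) - 2 * (∑' i, (⟪A (b i), D (b i)⟫).re)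
        + ∑' i, ‖D (b i)‖ ^ 2 := by
    calc ∑' i, ‖(A - D) (b i)‖ ^ 2
        = ∑' i, (‖A (b i)‖ ^ 2 - 2 * (⟪A (b i), D (b i)⟫).re + ‖D (b i)‖ ^ 2) :=
          tsum_congr hsub_apply
      _ = _ := by
          rw [Summable.tsum_add (hA_hs.sub (hcross_summ.mul_left 2)) hD_hs,
            Summable.tsum_sub hA_hs (hcross_summ.mul_left 2), tsum_mul_left]
  -- the cross term dominates ∑ ‖D (b i)‖²
  have hCD_term : ∀ i, (⟪b i, (C * D) (b i)⟫) = ⟪C (b i), D (b i)⟫ := by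
    intro i
    have h := sa_inner C hCsa (b i) (D (b i))
    simpa [ContinuousLinearMap.mul_apply] using h.symm
  have hCD_norm : ∀ i, ‖(⟪b i, (C * D) (b i)⟫)‖ ≤ ‖C (b i)‖ * ‖D (b i)‖ := by
    intro i
    rw [hCD_term i]
    exact norm_inner_le_norm _ _
  have hCD_bound : Summable fun i => ‖C (b i)‖ * ‖D (b i)‖ := by
    refine Summable.of_nonneg_of_le (fun i => by positivity) (fun i => ?_)
      ((hC_hs.add hD_hs).mul_left (1 / 2 : ℝ))
    have := two_mul_le_add_sq ‖C (b i)‖ ‖D (b i)‖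
    linarith
  have hCD_summ : Summable fun i => (⟪b i, (C * D) (b i)⟫) :=
    Summable.of_norm (Summable.of_nonneg_of_le (fun i => norm_nonneg _) hCD_norm hCD_bound)
  have hCD_re_summ : Summable fun i => (⟪b i, (C * D) (b i)⟫).re := by
    refine Summable.of_abs ?_
    refine Summable.of_nonneg_of_le (fun i => abs_nonneg _) (fun i => ?_) hCD_bound
    exact le_trans (Complex.abs_re_le_norm _) (hCD_norm i)
  have hECE_term : ∀ i, (⟪b i, (E * (C * E)) (b i)⟫) = ⟪E (b i), C (E (b i))⟫ := by
    intro i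
    have h := sa_inner E hEsa (b i) ((C * E) (b i))
    simpa [ContinuousLinearMap.mul_apply] using h.symm
  have hECE_summ : Summable fun i => (⟪b i, (E * (C * E)) (b i)⟫) := by
    refine Summable.of_norm ?_
    refine Summable.of_nonneg_of_le (fun i => norm_nonneg _) (fun i => ?_)
      (hE_hs.mul_left ‖C‖)
    rw [hECE_term i]
    calc ‖(⟪E (b i), C (E (b i))⟫)‖ ≤ ‖E (b i)‖ * ‖C (E (b i))‖ := norm_inner_le_norm _ _
      _ ≤ ‖E (b i)‖ * (‖C‖ * ‖E (b i)‖) := by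
          exact mul_le_mul_of_nonneg_left (C.le_opNorm _) (norm_nonneg _)
      _ = ‖C‖ * ‖E (b i)‖ ^ 2 := by ring
  have hCE_hs : Summable fun i => ‖(C * E) (b i)‖ ^ 2 := hcomp_hs C E hE_hs
  have htr_pos : 0 ≤ ∑' i, (⟪b i, (C * D) (b i)⟫).re := by
    have h1 : (∑' i, (⟪b i, (C * D) (b i)⟫)) = ∑' i, (⟪b i, (E * (C * E)) (b i)⟫) := by
      have hassoc : C * D = (C * E) * E := by rw [← hEE, ← mul_assoc]
      rw [hassoc]
      exact trace_comm b (C * E) E hCE_hs hE_hs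
    have h2 : (∑' i, (⟪b i, (C * D) (b i)⟫).re) = (∑' i, (⟪b i, (C * D) (b i)⟫)).re :=
      (Complex.re_tsum hCD_summ).symm
    rw [h2, h1, Complex.re_tsum hECE_summ]
    refine tsum_nonneg fun i => ?_
    rw [hECE_term i]
    exact pos_inner C hC (E (b i))
  have hcross_ge : (∑' i, ‖D (b i)‖ ^ 2) ≤ ∑' i, (⟪A (b i), D (b i)⟫).re := by
    have hterm : ∀ i, (⟪A (b i), D (b i)⟫).re
        = ‖D (b i)‖ ^ 2 + (⟪b i, (C * D) (b i)⟫).re := by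
      intro i
      have h1 : (⟪A (b i), D (b i)⟫) = ⟪b i, (A * D) (b i)⟫ := by
        have h := sa_inner A hAsa (b i) (D (b i))
        simpa [ContinuousLinearMap.mul_apply] using h
      have h2 : A * D = C * D + D * D := by
        rw [hCdef, sub_mul]
        abel
      have h3 : (⟪b i, (D * D) (b i)⟫).re = ‖D (b i)‖ ^ 2 := by
        have h5 : (⟪b i, (D * D) (b i)⟫) = ⟪D (b i), D (b i)⟫ := by
          have h := sa_inner D hDsa (b i) (D (b i))
          simpa [ContinuousLinearMap.mul_apply] using h.symm
        rw [h5, inner_self_re]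
      rw [h1, h2]
      simp only [ContinuousLinearMap.add_apply, inner_add_right, Complex.add_re]
      rw [h3]
      ring
    calc (∑' i, ‖D (b i)‖ ^ 2)
        ≤ (∑' i, ‖D (b i)‖ ^ 2) + ∑' i, (⟪b i, (C * D) (b i)⟫).re := le_add_of_nonneg_right htr_pos
      _ = ∑' i, (⟪A (b i), D (b i)⟫).re := by
          rw [← Summable.tsum_add hD_hs hCD_re_summ]
          exact tsum_congr fun i => (hterm i).symm
  -- pigeonhole
  have hmink : (∑' i, ‖A (b i)‖ ^ 2) ≤ (N : ℝ) ^ 2 * ∑' i, ‖D (b i)‖ ^ 2 := by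
    have hAsum : A = ∑ j', S * P j' * S := by
      have h6 : (∑ j', S * P j' * S) = S * (∑ j', P j') * S := by
        rw [Finset.mul_sum, Finset.sum_mul]
      rw [h6, hsum, mul_one, hSS]
    have h1 : Real.sqrt (∑' i, ‖A (b i)‖ ^ 2)
        ≤ ∑ j', Real.sqrt (∑' i, ‖(S * P j' * S) (b i)‖ ^ 2) := by
      conv_lhs => rw [hAsum]
      exact sqrt_tsum_sum_le b _ hSPS_hs
    have h2 : (∑ j' : Fin N, Real.sqrt (∑' i, ‖(S * P j' * S) (b i)‖ ^ 2))
        ≤ (N : ℝ) * Real.sqrt (∑' i, ‖D (b i)‖ ^ 2) := by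
      calc (∑ j' : Fin N, Real.sqrt (∑' i, ‖(S * P j' * S) (b i)‖ ^ 2))
          ≤ ∑ _j' : Fin N, Real.sqrt (∑' i, ‖D (b i)‖ ^ 2) :=
            Finset.sum_le_sum fun j' _ => Real.sqrt_le_sqrt (hg j')
        _ = (N : ℝ) * Real.sqrt (∑' i, ‖D (b i)‖ ^ 2) := by
            simp [Finset.sum_const, Finset.card_univ, nsmul_eq_mul]
    have h3 : Real.sqrt (∑' i, ‖A (b i)‖ ^ 2)
        ≤ (N : ℝ) * Real.sqrt (∑' i, ‖D (b i)‖ ^ 2) := le_trans h1 h2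
    have h4 : (∑' i, ‖A (b i)‖ ^ 2)
        = Real.sqrt (∑' i, ‖A (b i)‖ ^ 2) ^ 2 := by
      rw [Real.sq_sqrt (tsum_nonneg fun i => by positivity)]
    rw [h4]
    calc Real.sqrt (∑' i, ‖A (b i)‖ ^ 2) ^ 2
        ≤ ((N : ℝ) * Real.sqrt (∑' i, ‖D (b i)‖ ^ 2)) ^ 2 :=
          pow_le_pow_left₀ (Real.sqrt_nonneg _) h3 2
      _ = (N : ℝ) ^ 2 * Real.sqrt (∑' i, ‖D (b i)‖ ^ 2) ^ 2 := by ring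
      _ = (N : ℝ) ^ 2 * ∑' i, ‖D (b i)‖ ^ 2 := by
          rw [Real.sq_sqrt (tsum_nonneg fun i => by positivity)]
  -- finish
  have hN2 : (0 : ℝ) < (N : ℝ) ^ 2 := by positivity
  have hDiv : (∑' i, ‖A (b i)‖ ^ 2) / (N : ℝ) ^ 2 ≤ ∑' i, ‖D (b i)‖ ^ 2 :=
    (div_le_iff₀ hN2).mpr (by linarith [hmink])
  calc ∑' i, ‖(A - D) (b i)‖ ^ 2
      = (∑' i, ‖A (b i)‖ ^ 2) - 2 * (∑' i, (⟪A (b i), D (b i)⟫).re)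
        + ∑' i, ‖D (b i)‖ ^ 2 := hexp
    _ ≤ (∑' i, ‖A (b i)‖ ^ 2) - ∑' i, ‖D (b i)‖ ^ 2 := by linarith [hcross_ge]
    _ ≤ (∑' i, ‖A (b i)‖ ^ 2) - (∑' i, ‖A (b i)‖ ^ 2) / (N : ℝ) ^ 2 := by linarith [hDiv]
    _ = (1 - 1 / (N : ℝ) ^ 2) * ∑' i, ‖A (b i)‖ ^ 2 := by ring

end HSGreedyAux

/-- geometric HS decay of the depth-n HS-greedy extraction. -/
theorem hs_greedy_decay {ι : Type*} (b : HilbertBasis ι ℂ H)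
    {N : ℕ} (hN : 0 < N)
    (P : Fin N → H →L[ℂ] H)
    (hsa : ∀ j, IsSelfAdjoint (P j)) (hidem : ∀ j, IsIdempotentElem (P j))
    (horth : ∀ j j', j ≠ j' → P j * P j' = 0)
    (hsum : ∑ j, P j = 1)
    (R : H →L[ℂ] H) (hR : 0 ≤ R)
    (htc : Summable fun i => (inner ℂ (b i) (R (b i)) : ℂ).re)
    (Rseq : ℕ → H →L[ℂ] H) (jsel : ℕ → Fin N)
    (h0 : Rseq 0 = R)
    (hpos : ∀ k, 0 ≤ Rseq k)
    (hrec : ∀ k, Rseq (k + 1)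
      = Rseq k - CFC.sqrt (Rseq k) * P (jsel k) * CFC.sqrt (Rseq k))
    (hgreedy : ∀ k, ∀ j : Fin N,
      ∑' i, ‖(CFC.sqrt (Rseq k) * P j * CFC.sqrt (Rseq k)) (b i)‖ ^ 2
        ≤ ∑' i, ‖(CFC.sqrt (Rseq k) * P (jsel k) * CFC.sqrt (Rseq k)) (b i)‖ ^ 2) :
    ∀ k, 1 ≤ k →
      ∑' i, ‖Rseq k (b i)‖ ^ 2
        ≤ (1 - 1 / (N : ℝ) ^ 2) ^ k * ∑' i, ‖R (b i)‖ ^ 2 := by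
  have hdom : ∀ k (x : H), (inner ℂ x (Rseq k x) : ℂ).re ≤ (inner ℂ x (R x) : ℂ).re := by
    intro k
    induction k with
    | zero => intro x; rw [h0]
    | succ k ih =>
      intro x
      have hS : (0 : H →L[ℂ] H) ≤ CFC.sqrt (Rseq k) := CFC.sqrt_nonneg _
      have hD : (0 : H →L[ℂ] H)
          ≤ CFC.sqrt (Rseq k) * P (jsel k) * CFC.sqrt (Rseq k) :=
        HSGreedyAux.conj_pos _ _ (IsSelfAdjoint.of_nonneg hS) (hsa _) (hidem _)
      have hDpos := HSGreedyAux.pos_inner _ hD x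
      rw [hrec k]
      rw [ContinuousLinearMap.sub_apply, inner_sub_right]
      have := ih x
      simp only [Complex.sub_re]
      linarith
  have htck : ∀ k, Summable fun i => (inner ℂ (b i) (Rseq k (b i)) : ℂ).re := by
    intro k
    exact Summable.of_nonneg_of_le (fun i => HSGreedyAux.pos_inner _ (hpos k) _)
      (fun i => hdom k (b i)) htc
  have hfac : (0 : ℝ) ≤ 1 - 1 / (N : ℝ) ^ 2 := by
    have h1 : (1 : ℝ) ≤ (N : ℝ) := by exact_mod_cast hN
    have h2 : (1 : ℝ) ≤ (N : ℝ) ^ 2 := by nlinarith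
    have h3 : 1 / (N : ℝ) ^ 2 ≤ 1 := by
      rw [div_le_one (by positivity)]
      exact h2
    linarith
  have hgen : ∀ k, ∑' i, ‖Rseq k (b i)‖ ^ 2
      ≤ (1 - 1 / (N : ℝ) ^ 2) ^ k * ∑' i, ‖R (b i)‖ ^ 2 := by
    intro k
    induction k with
    | zero => rw [h0]; simp
    | succ k ih =>
      have hstep := HSGreedyAux.step_bound b hN P hsa hidem hsum (Rseq k) (hpos k) (htck k)
        (jsel k) (hgreedy k)
      rw [hrec k]
      calc ∑' i, ‖(Rseq k - CFC.sqrt (Rseq k) * P (jsel k) * CFC.sqrt (Rseq k)) (b i)‖ ^ 2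
          ≤ (1 - 1 / (N : ℝ) ^ 2) * ∑' i, ‖Rseq k (b i)‖ ^ 2 := hstep
        _ ≤ (1 - 1 / (N : ℝ) ^ 2) * ((1 - 1 / (N : ℝ) ^ 2) ^ k * ∑' i, ‖R (b i)‖ ^ 2) :=
            mul_le_mul_of_nonneg_left ih hfac
        _ = (1 - 1 / (N : ℝ) ^ 2) ^ (k + 1) * ∑' i, ‖R (b i)‖ ^ 2 := by ring
  exact fun k _ => hgen k
end
end

section
/- In the HS-greedy setting above, if at some step R^{(k-1)} commutes with every P_j (i.e., is block-diagonal), then the one-step bound improves to ‖R^{(k)}‖₂² ≤ (1 − 1/N) ‖R^{(k-1)}‖₂². -/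
set_option synthInstance.maxHeartbeats 1000000
set_option maxHeartbeats 1000000

noncomputable section

variable {H : Type*} [NormedAddCommGroup H] [InnerProductSpace ℂ H] [CompleteSpace H]

open scoped InnerProductSpace

/-- improved one-step HS bound when the operator is block-diagonal. -/
theorem hs_greedy_block_diagonal_step {ι : Type*} (b : HilbertBasis ι ℂ H)
    {N : ℕ} (hN : 0 < N)
    (P : Fin N → H →L[ℂ] H)
    (hsa : ∀ j, IsSelfAdjoint (P j)) (hidem : ∀ j, IsIdempotentElem (P j))
    (horth : ∀ j j', j ≠ j' → P j * P j' = 0)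
    (hsum : ∑ j, P j = 1)
    (A : H →L[ℂ] H) (hA : 0 ≤ A)
    (hHS : Summable fun i => ‖A (b i)‖ ^ 2)
    (hcomm : ∀ j, A * P j = P j * A)
    (j₀ : Fin N)
    (hmax : ∀ j, ∑' i, ‖(CFC.sqrt A * P j * CFC.sqrt A) (b i)‖ ^ 2
      ≤ ∑' i, ‖(CFC.sqrt A * P j₀ * CFC.sqrt A) (b i)‖ ^ 2) :
    ∑' i, ‖(A - CFC.sqrt A * P j₀ * CFC.sqrt A) (b i)‖ ^ 2
      ≤ (1 - 1 / (N : ℝ)) * ∑' i, ‖A (b i)‖ ^ 2 := by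
  set S : H →L[ℂ] H := CFC.sqrt A with hSdef
  have hS : (0 : H →L[ℂ] H) ≤ S := CFC.sqrt_nonneg _
  have hSS : S * S = A := CFC.sqrt_mul_sqrt_self A hA
  -- `S` commutes with each `P j`
  have hScomm : ∀ j, S * P j = P j * S := by
    intro j
    set U : H →L[ℂ] H := 1 - (2 : ℂ) • P j with hUdef
    have hU2 : U * U = 1 := by
      have h := (hidem j)
      simp only [hUdef, mul_sub, sub_mul, one_mul, mul_one, mul_smul_comm, smul_mul_assoc,
        smul_smul, h.eq]
      module
    have hUsa : star U = U := by
      have h := (hsa j).star_eq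
      simp [hUdef, star_smul, h]
    have hUA : U * A = A * U := by
      simp only [hUdef, mul_sub, sub_mul, one_mul, mul_one, mul_smul_comm, smul_mul_assoc,
        hcomm j]
    have hUSU_nonneg : (0 : H →L[ℂ] H) ≤ U * S * U := by
      have := star_left_conjugate_nonneg hS U
      rwa [hUsa] at this
    have hUSU_sq : (U * S * U) * (U * S * U) = A := by
      calc (U * S * U) * (U * S * U) = U * S * (U * U) * S * U := by
            simp only [mul_assoc]
        _ = U * (S * S) * U := by rw [hU2]; simp only [mul_assoc, one_mul, mul_one]
        _ = U * A * U := by rw [hSS]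
        _ = A * (U * U) := by rw [hUA]; simp only [mul_assoc]
        _ = A := by rw [hU2, mul_one]
    have hfix : S = U * S * U := by
      rw [hSdef]; exact (CFC.sqrt_unique hUSU_sq hUSU_nonneg)
    have hUS : S * U = U * S := by
      calc S * U = (U * S * U) * U := by rw [← hfix]
        _ = U * S * (U * U) := by simp only [mul_assoc]
        _ = U * S := by rw [hU2, mul_one]
    have h2 : (2 : ℂ) • (S * P j) = (2 : ℂ) • (P j * S) := by
      have hexp : S - (2 : ℂ) • (S * P j) = S - (2 : ℂ) • (P j * S) := by
        calc S - (2 : ℂ) • (S * P j) = S * U := by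
              simp [hUdef, mul_sub, mul_smul_comm]
          _ = U * S := hUS
          _ = S - (2 : ℂ) • (P j * S) := by
              simp [hUdef, sub_mul, smul_mul_assoc]
      exact sub_right_injective hexp
    exact smul_right_injective _ (two_ne_zero) h2
  -- hence `S * P j * S = P j * A`
  have hSPS : ∀ j, S * P j * S = P j * A := fun j => by
    rw [hScomm j, mul_assoc, hSS]
  -- Pythagoras for the projections
  have pyth : ∀ y : H, ∑ j, ‖P j y‖ ^ 2 = ‖y‖ ^ 2 := by
    intro y
    have hy : ∑ j, P j y = y := by
      have := congrArg (fun T : H →L[ℂ] H => T y) hsum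
      simpa using this
    have hterm : ∀ j, ⟪P j y, y⟫_ℂ = (‖P j y‖ ^ 2 : ℝ) := by
      intro j
      have h1 : ⟪P j y, y⟫_ℂ = ⟪P j (P j y), y⟫_ℂ := by
        conv_lhs => rw [show P j y = P j (P j y) from by
          have := congrArg (fun T : H →L[ℂ] H => T y) (hidem j).eq
          simpa using this.symm]
      have h2 : ⟪P j (P j y), y⟫_ℂ = ⟪P j y, P j y⟫_ℂ := by
        rw [← ContinuousLinearMap.adjoint_inner_left (P j), (hsa j).adjoint_eq]
      rw [h1, h2, inner_self_eq_norm_sq_to_K]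
      norm_num
    have hiy : ⟪y, y⟫_ℂ = ∑ j, ⟪P j y, y⟫_ℂ := by
      rw [← sum_inner, hy]
    have h3 : (⟪y, y⟫_ℂ).re = ∑ j, ‖P j y‖ ^ 2 := by
      rw [hiy, Complex.re_sum]
      exact Finset.sum_congr rfl fun j _ => by rw [hterm j, Complex.ofReal_re]
    have h4 : RCLike.re ⟪y, y⟫_ℂ = ‖y‖ ^ 2 := inner_self_eq_norm_sq y
    rw [← h4, RCLike.re_to_complex, h3]
  -- pointwise, `(S * P j * S) x = P j (A x)`
  have happly : ∀ (j : Fin N) (x : H), (S * P j * S) x = P j (A x) := by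
    intro j x
    rw [hSPS j]; rfl
  -- pointwise identity for the remainder
  have hrem : ∀ x : H, ‖(A - S * P j₀ * S) x‖ ^ 2 = ‖A x‖ ^ 2 - ‖P j₀ (A x)‖ ^ 2 := by
    intro x
    set y := A x with hy
    have hzx : (A - S * P j₀ * S) x = y - P j₀ y := by
      rw [ContinuousLinearMap.sub_apply, happly j₀]
    rw [hzx]
    set z := y - P j₀ y with hz
    have hPz : ∀ j, P j z = if j = j₀ then 0 else P j y := by
      intro j
      by_cases hj : j = j₀
      · subst hj
        have : P j (P j y) = P j y := by
          have := congrArg (fun T : H →L[ℂ] H => T y) (hidem j).eq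
          simpa using this
        simp [hz, map_sub, this]
      · have : P j (P j₀ y) = 0 := by
          have := congrArg (fun T : H →L[ℂ] H => T y) (horth j j₀ hj)
          simpa using this
        simp [hz, map_sub, this, hj]
    have h1 : ∑ j, ‖P j z‖ ^ 2 = ‖z‖ ^ 2 := pyth z
    have h2 : ∑ j, ‖P j z‖ ^ 2 = (∑ j, ‖P j y‖ ^ 2) - ‖P j₀ y‖ ^ 2 := by
      have step1 : ∑ j, ‖P j z‖ ^ 2
          = ∑ j, (‖P j y‖ ^ 2 - if j = j₀ then ‖P j₀ y‖ ^ 2 else 0) := by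
        refine Finset.sum_congr rfl fun j _ => ?_
        rw [hPz j]
        by_cases hj : j = j₀
        · subst hj; simp
        · simp [hj]
      rw [step1, Finset.sum_sub_distrib, Finset.sum_ite_eq' Finset.univ j₀
        (fun _ => ‖P j₀ y‖ ^ 2)]
      simp
    rw [← h1, h2, pyth y]
  -- norms of individual blocks are dominated
  have hble : ∀ (j : Fin N) (x : H), ‖P j x‖ ^ 2 ≤ ‖x‖ ^ 2 := by
    intro j x
    rw [← pyth x]
    exact Finset.single_le_sum (fun (j : Fin N) _ => sq_nonneg ‖P j x‖) (Finset.mem_univ j)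
  -- summability of each block
  have hsumm : ∀ j, Summable fun i => ‖P j (A (b i))‖ ^ 2 := by
    intro j
    exact Summable.of_nonneg_of_le (fun i => sq_nonneg _) (fun i => hble j (A (b i))) hHS
  -- the tsums in `hmax` are block norms
  set T : Fin N → ℝ := fun j => ∑' i, ‖P j (A (b i))‖ ^ 2 with hTdef
  set Sg : ℝ := ∑' i, ‖A (b i)‖ ^ 2 with hSgdef
  have hmax' : ∀ j, T j ≤ T j₀ := by
    intro j
    have := hmax j
    simpa only [happly] using this
  have hsum_T : ∑ j, T j = Sg := by
    rw [hTdef, ← Summable.tsum_finsetSum (fun j _ => hsumm j)]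
    exact tsum_congr fun i => pyth (A (b i))
  have hNT : Sg ≤ (N : ℝ) * T j₀ := by
    rw [← hsum_T]
    calc ∑ j, T j ≤ ∑ _j : Fin N, T j₀ := Finset.sum_le_sum fun j _ => hmax' j
      _ = (N : ℝ) * T j₀ := by simp [mul_comm]
  have hSg_nonneg : 0 ≤ Sg := tsum_nonneg fun i => sq_nonneg _
  have hLHS : ∑' i, ‖(A - S * P j₀ * S) (b i)‖ ^ 2 = Sg - T j₀ := by
    have : (fun i => ‖(A - S * P j₀ * S) (b i)‖ ^ 2)
        = fun i => ‖A (b i)‖ ^ 2 - ‖P j₀ (A (b i))‖ ^ 2 := by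
      funext i; exact hrem (b i)
    rw [this, Summable.tsum_sub hHS (hsumm j₀)]
  rw [hLHS]
  have hNpos : (0 : ℝ) < N := by exact_mod_cast hN
  have h1N : (1 - 1 / (N : ℝ)) * Sg = Sg - Sg / N := by
    field_simp
  rw [h1N]
  have : Sg / N ≤ T j₀ := by
    rw [div_le_iff₀ hNpos]
    nlinarith [hmax' j₀]
  linarith
end
end
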